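/- Suppose p, q : ℝ² → ℝ^N (functions of x and t) satisfy the backward Neumann systems (3.9) in x and (3.10) in t, with ⟨p,p⟩ = 1, ⟨p,q⟩ = 0, ⟨Λp,p⟩ ≠ 0, and ⟨q,q⟩ + ⟨Λ²p,p⟩/⟨Λp,p⟩² = α. Then v = ⟨Λp,p⟩^{−2} and w = −⟨Λ⁻¹p,p⟩ satisfy the conservation law v_t = −2v w_x − v_x w. -/

import Mathlib

open Finset

theorem stmt_19 (N : ℕ) (α : ℝ) (lam : Fin N → ℝ)
    (hne : ∀ j, lam j ≠ 0) (hdist : Function.Injective lam)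
    (p q : ℝ → ℝ → Fin N → ℝ)
    (hΛpp : ∀ x t, ∑ j, lam j * (p x t j)^2 ≠ 0)
    (hpx : ∀ x t j, HasDerivAt (fun y => p y t j) (q x t j) x)
    (hqx : ∀ x t j, HasDerivAt (fun y => q y t j)
      (-α * p x t j
        + (2 * (∑ i, (lam i)^2 * (p x t i)^2) / (∑ i, lam i * (p x t i)^2)^3)
            * (lam j * p x t j)
        - (1 / (∑ i, lam i * (p x t i)^2)^2) * ((lam j)^2 * p x t j)) x)
    (hpt : ∀ x t j, HasDerivAt (fun s => p x s j)
      (-(∑ i, (lam i)⁻¹ * p x t i * q x t i) * p x t j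
        + (∑ i, (lam i)⁻¹ * (p x t i)^2) * q x t j
        + (lam j)⁻¹ * q x t j) t)
    (hsphere : ∀ x t, ∑ j, (p x t j)^2 = 1)
    (htangent : ∀ x t, ∑ j, p x t j * q x t j = 0)
    (hconst : ∀ x t, ∑ j, (q x t j)^2
        + (∑ j, (lam j)^2 * (p x t j)^2) / (∑ j, lam j * (p x t j)^2)^2 = α) :
    let v : ℝ → ℝ → ℝ := fun x t => 1 / (∑ j, lam j * (p x t j)^2)^2
    let w : ℝ → ℝ → ℝ := fun x t => -(∑ j, (lam j)⁻¹ * (p x t j)^2)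
    ∀ x t, deriv (fun s => v x s) t
      = -2 * v x t * deriv (fun y => w y t) x - deriv (fun y => v y t) x * w x t := by
  intro v w x t
  set A := ∑ i, (lam i)⁻¹ * p x t i * q x t i with hA
  set B := ∑ i, (lam i)⁻¹ * (p x t i)^2 with hB
  set E := ∑ j, lam j * (p x t j)^2 with hE
  set F := ∑ j, lam j * (p x t j * q x t j) with hF
  have hEne : E ≠ 0 := hΛpp x t
  -- derivative of E in t
  have hEt : HasDerivAt (fun s => ∑ j, lam j * (p x s j)^2)
      (∑ j, lam j * (2 * p x t j ^ 1 * (-A * p x t j + B * q x t j + (lam j)⁻¹ * q x t j))) t :=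
    HasDerivAt.fun_sum fun j _ => ((hpt x t j).fun_pow 2).const_mul (lam j)
  have hEx : HasDerivAt (fun y => ∑ j, lam j * (p y t j)^2)
      (∑ j, lam j * (2 * p x t j ^ 1 * q x t j)) x :=
    HasDerivAt.fun_sum fun j _ => ((hpx x t j).fun_pow 2).const_mul (lam j)
  have hWx : HasDerivAt (fun y => -(∑ j, (lam j)⁻¹ * (p y t j)^2))
      (-(∑ j, (lam j)⁻¹ * (2 * p x t j ^ 1 * q x t j))) x :=
    (HasDerivAt.fun_sum fun j _ => ((hpx x t j).fun_pow 2).const_mul ((lam j)⁻¹)).neg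
  -- sum identities
  have hDt : (∑ j, lam j * (2 * p x t j ^ 1 * (-A * p x t j + B * q x t j + (lam j)⁻¹ * q x t j)))
      = 2 * (-A * E + B * F) := by
    have : ∀ j : Fin N, lam j * (2 * p x t j ^ 1 * (-A * p x t j + B * q x t j + (lam j)⁻¹ * q x t j))
        = (-2*A) * (lam j * (p x t j)^2) + (2*B) * (lam j * (p x t j * q x t j))
          + 2 * (p x t j * q x t j) := by
      intro j
      field_simp [hne j]
    rw [Finset.sum_congr rfl fun j _ => this j, Finset.sum_add_distrib,
      Finset.sum_add_distrib, ← Finset.mul_sum, ← Finset.mul_sum, ← Finset.mul_sum,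
      htangent x t, ← hE, ← hF]
    ring
  have hDx : (∑ j, lam j * (2 * p x t j ^ 1 * q x t j)) = 2 * F := by
    rw [hF, Finset.mul_sum]
    exact Finset.sum_congr rfl fun j _ => by ring
  have hAx : (∑ j, (lam j)⁻¹ * (2 * p x t j ^ 1 * q x t j)) = 2 * A := by
    rw [hA, Finset.mul_sum]
    exact Finset.sum_congr rfl fun j _ => by ring
  -- derivative of v in t
  have hvt : HasDerivAt (fun s => v x s)
      (-(2 * E ^ 1 * (2 * (-A * E + B * F))) / (E^2)^2) t := by
    have h1 := (hEt.fun_pow 2).fun_inv (pow_ne_zero 2 hEne)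
    rw [hDt] at h1
    simpa [v, one_div, div_eq_mul_inv] using h1
  have hvx : HasDerivAt (fun y => v y t)
      (-(2 * E ^ 1 * (2 * F)) / (E^2)^2) x := by
    have h1 := (hEx.fun_pow 2).fun_inv (pow_ne_zero 2 hEne)
    rw [hDx] at h1
    simpa [v, one_div, div_eq_mul_inv] using h1
  have hwx : HasDerivAt (fun y => w y t) (-(2 * A)) x := by
    have := hWx
    rw [hAx] at this
    simpa [w] using this
  rw [hvt.deriv, hvx.deriv, hwx.deriv]
  show _ = -2 * (1 / E^2) * _ - _ * (-B)
  field_simp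
  ring
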